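/- For every $r \ge 1$ and $\alpha > 0$ there exists $n_0$ such that for every $r$-uniform hypergraph $F = (V,E)$ on $n \ge n_0$ vertices with edge density $\rho = |E|/\binom{n}{r} \in [\alpha, 1-\alpha]$, one has $\sum_{\{v,v'\} \in \binom{V}{2}} |D_F(v,v')| \ge \alpha(1-\alpha)\binom{n}{r+1}$. -/

import Mathlib

open Finset

namespace Stmt4Aux

variable {V : Type} [DecidableEq V]

def kk (E : Finset (Finset V)) (S : Finset V) : ℕ :=
  (S.filter (fun u => S.erase u ∈ E)).card

def deg (E : Finset (Finset V)) (v : V) : ℕ := (E.filter (fun e => v ∈ e)).card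

def link (E : Finset (Finset V)) (v : V) : Finset (Finset V) :=
  (E.filter (fun e => v ∈ e)).image (fun e => e.erase v)

noncomputable def Wt (u : ℕ) (A : Finset V) (E : Finset (Finset V)) : ℝ :=
  ∑ S ∈ A.powersetCard (u+1), (kk E S : ℝ) * ((u+1 : ℝ) - (kk E S : ℝ))

lemma kk_le (E : Finset (Finset V)) (S : Finset V) : kk E S ≤ S.card :=
  card_filter_le _ _

lemma Wt_nonneg (u : ℕ) (A : Finset V) (E : Finset (Finset V)) : 0 ≤ Wt u A E := by
  refine Finset.sum_nonneg fun S hS => ?_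
  have hS' := (mem_powersetCard.mp hS).2
  have h1 : (kk E S : ℝ) ≤ (u+1 : ℝ) := by
    have := kk_le E S; rw [hS'] at this; exact_mod_cast this
  have h0 : (0:ℝ) ≤ (kk E S : ℝ) := by positivity
  nlinarith

lemma mem_link {E : Finset (Finset V)} {v : V} {e' : Finset V} :
    e' ∈ link E v ↔ v ∉ e' ∧ insert v e' ∈ E := by
  constructor
  · rintro h
    rw [link, mem_image] at h
    obtain ⟨e, he, rfl⟩ := h
    rw [mem_filter] at he
    exact ⟨notMem_erase _ _, by rw [insert_erase he.2]; exact he.1⟩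
  · rintro ⟨hv, he⟩
    rw [link, mem_image]
    exact ⟨insert v e', by simp [mem_filter, he], erase_insert hv⟩

lemma card_link (E : Finset (Finset V)) (v : V) : (link E v).card = deg E v := by
  rw [link, deg]
  apply card_image_of_injOn
  intro e he f hf hef
  rw [mem_coe, mem_filter] at he hf
  simp only [] at hef
  rw [← insert_erase he.2, hef, insert_erase hf.2]

lemma link_edges {A : Finset V} {E : Finset (Finset V)} {u : ℕ}
    (hE : ∀ e ∈ E, e ⊆ A ∧ e.card = u + 1) (v : V) :
    ∀ e' ∈ link E v, e' ⊆ A.erase v ∧ e'.card = u := by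
  intro e' he'
  rw [link, mem_image] at he'
  obtain ⟨e, he, rfl⟩ := he'
  rw [mem_filter] at he
  obtain ⟨hsub, hcard⟩ := hE e he.1
  exact ⟨erase_subset_erase v hsub, by rw [card_erase_of_mem he.2, hcard]; omega⟩

lemma kk_link {E : Finset (Finset V)} {v : V} {S : Finset V} (hv : v ∈ S) :
    kk E S = kk (link E v) (S.erase v) + (if S.erase v ∈ E then 1 else 0) := by
  have hfe : (S.erase v).filter (fun w => (S.erase v).erase w ∈ link E v)
      = (S.filter (fun w => S.erase w ∈ E)).erase v := by
    rw [← filter_erase]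
    apply filter_congr
    intro w hw
    have hwv : w ≠ v := ne_of_mem_erase hw
    rw [mem_link]
    have h1 : insert v ((S.erase v).erase w) = S.erase w := by
      ext x
      simp only [mem_insert, mem_erase]
      constructor
      · rintro (rfl | ⟨hxw, _, hxS⟩)
        · exact ⟨Ne.symm hwv, hv⟩
        · exact ⟨hxw, hxS⟩
      · rintro ⟨hxw, hxS⟩
        by_cases hxv : x = v
        · exact Or.inl hxv
        · exact Or.inr ⟨hxw, hxv, hxS⟩
    rw [h1]
    simp [mem_erase, hwv]
  rw [kk, kk, hfe]
  by_cases h : S.erase v ∈ E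
  · have hvf : v ∈ S.filter (fun w => S.erase w ∈ E) := mem_filter.mpr ⟨hv, h⟩
    rw [card_erase_of_mem hvf, if_pos h]
    have : 1 ≤ (S.filter (fun w => S.erase w ∈ E)).card := card_pos.mpr ⟨v, hvf⟩
    omega
  · have hvf : v ∉ S.filter (fun w => S.erase w ∈ E) := by
      simp [mem_filter, h]
    rw [erase_eq_of_notMem hvf, if_neg h]
    rfl

lemma reindex (A : Finset V) (k : ℕ) (f : V → Finset V → ℝ) :
    ∑ v ∈ A, ∑ S ∈ (A.erase v).powersetCard k, f v S
      = ∑ S ∈ A.powersetCard (k+1), ∑ v ∈ S, f v (S.erase v) := by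
  rw [Finset.sum_sigma', Finset.sum_sigma']
  apply Finset.sum_nbij' (i := fun p => (⟨insert p.1 p.2, p.1⟩ : Σ _ : Finset V, V))
    (j := fun q => (⟨q.2, q.1.erase q.2⟩ : Σ _ : V, Finset V))
  · rintro ⟨v, S⟩ hp
    rw [mem_sigma] at hp
    obtain ⟨hv, hS⟩ := hp
    rw [mem_powersetCard] at hS
    have hvS : v ∉ S := fun h => (notMem_erase v A) (hS.1 h)
    rw [mem_sigma, mem_powersetCard]
    refine ⟨⟨insert_subset (by simpa using hv) (hS.1.trans (erase_subset _ _)), ?_⟩, mem_insert_self _ _⟩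
    rw [card_insert_of_notMem hvS, hS.2]
  · rintro ⟨S, v⟩ hq
    rw [mem_sigma] at hq
    obtain ⟨hS, hv⟩ := hq
    rw [mem_powersetCard] at hS
    rw [mem_sigma, mem_powersetCard]
    refine ⟨hS.1 hv, ?_, ?_⟩
    · intro x hx
      rw [mem_erase] at hx ⊢
      exact ⟨hx.1, hS.1 hx.2⟩
    · rw [card_erase_of_mem hv, hS.2]; omega
  · rintro ⟨v, S⟩ hp
    rw [mem_sigma] at hp
    obtain ⟨hv, hS⟩ := hp
    rw [mem_powersetCard] at hS
    have hvS : v ∉ S := fun h => (notMem_erase v A) (hS.1 h)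
    simp [erase_insert hvS]
  · rintro ⟨S, v⟩ hq
    rw [mem_sigma] at hq
    obtain ⟨hS, hv⟩ := hq
    simp [insert_erase hv]
  · rintro ⟨v, S⟩ hp
    rw [mem_sigma] at hp
    obtain ⟨hv, hS⟩ := hp
    rw [mem_powersetCard] at hS
    have hvS : v ∉ S := fun h => (notMem_erase v A) (hS.1 h)
    simp [erase_insert hvS]


lemma perS (E : Finset (Finset V)) (c : ℕ) {S : Finset V} (hS : S.card = c + 2) :
    ∑ v ∈ S, (kk (link E v) (S.erase v) : ℝ) * ((c+1 : ℝ) - (kk (link E v) (S.erase v) : ℝ))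
      = (c : ℝ) * ((kk E S : ℝ) * ((c+2 : ℝ) - (kk E S : ℝ))) := by
  set K := kk E S with hK
  have h1 : ∀ v ∈ S, (kk (link E v) (S.erase v) : ℝ)
      = (K : ℝ) - (if S.erase v ∈ E then (1:ℝ) else 0) := by
    intro v hv
    have h := kk_link (E := E) hv
    by_cases he : S.erase v ∈ E
    · rw [if_pos he]
      rw [if_pos he] at h
      have : (K : ℝ) = (kk (link E v) (S.erase v) : ℝ) + 1 := by exact_mod_cast h
      linarith
    · rw [if_neg he]
      rw [if_neg he] at h
      have : (K : ℝ) = (kk (link E v) (S.erase v) : ℝ) := by exact_mod_cast h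
      linarith
  have h2 : ∀ v ∈ S, (kk (link E v) (S.erase v) : ℝ)
        * ((c+1 : ℝ) - (kk (link E v) (S.erase v) : ℝ))
      = (K : ℝ) * ((c+1 : ℝ) - K) + (if S.erase v ∈ E then (1:ℝ) else 0)
          * (2 * (K:ℝ) - ((c:ℝ)+2)) := by
    intro v hv
    rw [h1 v hv]
    by_cases he : S.erase v ∈ E <;> simp [he] <;> ring
  rw [Finset.sum_congr rfl h2, Finset.sum_add_distrib, Finset.sum_const, hS,
    ← Finset.sum_mul, Finset.sum_boole]
  have h3 : (S.filter (fun v => S.erase v ∈ E)).card = K := rfl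
  rw [h3]
  push_cast
  ring

lemma linkIdentity (E : Finset (Finset V)) (c : ℕ) (A : Finset V) :
    ∑ v ∈ A, Wt c (A.erase v) (link E v) = (c : ℝ) * Wt (c+1) A E := by
  unfold Wt
  rw [reindex A (c+1) (fun v S' => (kk (link E v) S' : ℝ) * ((c+1 : ℝ) - (kk (link E v) S' : ℝ)))]
  rw [Finset.mul_sum]
  apply Finset.sum_congr rfl
  intro S hS
  have hcard : S.card = c + 2 := by
    have := (mem_powersetCard.mp hS).2; omega
  have := perS E c (S := S) hcard
  rw [this]
  push_cast
  ring


lemma pairCount (E : Finset (Finset V)) {u : ℕ} {A S : Finset V}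
    (hSA : S ⊆ A) (hS : S.card = u + 1) :
    ((A.offDiag.filter (fun p => p.1 ∈ S ∧ p.2 ∈ S ∧
        ¬ ((S.erase p.1 ∈ E) ↔ (S.erase p.2 ∈ E)))).card)
      = 2 * kk E S * (u + 1 - kk E S) := by
  set Af := S.filter (fun x => S.erase x ∈ E) with hAf
  set Bf := S.filter (fun x => ¬ (S.erase x ∈ E)) with hBf
  have hset : A.offDiag.filter (fun p => p.1 ∈ S ∧ p.2 ∈ S ∧
      ¬ ((S.erase p.1 ∈ E) ↔ (S.erase p.2 ∈ E))) = Af ×ˢ Bf ∪ Bf ×ˢ Af := by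
    ext ⟨x, y⟩
    simp only [mem_filter, mem_offDiag, mem_union, mem_product, hAf, hBf]
    constructor
    · rintro ⟨⟨-, -, -⟩, hxS, hyS, hxor⟩
      by_cases h : S.erase x ∈ E
      · exact Or.inl ⟨⟨hxS, h⟩, ⟨hyS, fun hy => hxor ⟨fun _ => hy, fun _ => h⟩⟩⟩
      · refine Or.inr ⟨⟨hxS, h⟩, ⟨hyS, ?_⟩⟩
        by_contra hy
        exact hxor ⟨fun h' => absurd h' h, fun h' => absurd h' hy⟩
    · rintro (⟨⟨hxS, hx⟩, hyS, hy⟩ | ⟨⟨hxS, hx⟩, hyS, hy⟩)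
      · refine ⟨⟨hSA hxS, hSA hyS, ?_⟩, hxS, hyS, fun hiff => hy (hiff.mp hx)⟩
        rintro rfl; exact hy hx
      · refine ⟨⟨hSA hxS, hSA hyS, ?_⟩, hxS, hyS, fun hiff => hx (hiff.mpr hy)⟩
        rintro rfl; exact hx hy
  have hdisj : Disjoint (Af ×ˢ Bf) (Bf ×ˢ Af) := by
    rw [disjoint_left]
    rintro ⟨x, y⟩ h1 h2
    rw [mem_product] at h1 h2
    exact (mem_filter.mp h2.1).2 (mem_filter.mp h1.1).2
  have hcards : Af.card + Bf.card = u + 1 := by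
    rw [hAf, hBf, card_filter_add_card_filter_not, hS]
  have hAfk : Af.card = kk E S := rfl
  rw [hset, card_union_of_disjoint hdisj, card_product, card_product, hAfk]
  have hBfc : Bf.card = u + 1 - kk E S := by omega
  rw [hBfc]; ring

lemma F1 (E : Finset (Finset V)) (u : ℕ) (A : Finset V) :
    ∑ p ∈ A.offDiag, (((A.powersetCard (u+1)).filter (fun S => p.1 ∈ S ∧ p.2 ∈ S ∧
        ¬ ((S.erase p.1 ∈ E) ↔ (S.erase p.2 ∈ E)))).card : ℝ)
      = 2 * Wt u A E := by
  have step1 : ∀ p : V × V, (((A.powersetCard (u+1)).filter (fun S => p.1 ∈ S ∧ p.2 ∈ S ∧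
        ¬ ((S.erase p.1 ∈ E) ↔ (S.erase p.2 ∈ E)))).card : ℝ)
      = ∑ S ∈ A.powersetCard (u+1), (if (p.1 ∈ S ∧ p.2 ∈ S ∧
        ¬ ((S.erase p.1 ∈ E) ↔ (S.erase p.2 ∈ E))) then (1:ℝ) else 0) := by
    intro p
    rw [Finset.sum_boole]
  rw [Finset.sum_congr rfl (fun p _ => step1 p), Finset.sum_comm]
  unfold Wt
  rw [Finset.mul_sum]
  apply Finset.sum_congr rfl
  intro S hS
  rw [mem_powersetCard] at hS
  rw [Finset.sum_boole]
  have := pairCount E hS.1 hS.2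
  rw [this]
  have hk : kk E S ≤ u + 1 := by
    have := kk_le E S; omega
  push_cast [hk]
  ring


lemma deg_le {A : Finset V} {E : Finset (Finset V)} {u : ℕ}
    (hE : ∀ e ∈ E, e ⊆ A ∧ e.card = u + 1) {x : V} (hx : x ∈ A) :
    deg E x ≤ (A.card - 1).choose u := by
  have h1 : link E x ⊆ (A.erase x).powersetCard u := by
    intro e' he'
    rw [mem_powersetCard]
    exact link_edges hE x e' he'
  have h2 := card_le_card h1
  rw [card_link, card_powersetCard, card_erase_of_mem hx] at h2
  exact h2

lemma sum_deg {A : Finset V} {E : Finset (Finset V)} {u : ℕ}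
    (hE : ∀ e ∈ E, e ⊆ A ∧ e.card = u) :
    ∑ v ∈ A, deg E v = u * E.card := by
  unfold deg
  have step : ∀ v, (E.filter (fun e => v ∈ e)).card
      = ∑ e ∈ E, (if v ∈ e then 1 else 0) := fun v => by
    rw [Finset.sum_boole]; simp
  rw [Finset.sum_congr rfl (fun v _ => step v), Finset.sum_comm]
  have step2 : ∀ e ∈ E, (∑ v ∈ A, if v ∈ e then 1 else 0) = u := by
    intro e he
    rw [Finset.sum_boole]
    have : A.filter (fun v => v ∈ e) = e := by
      ext z
      simp only [mem_filter]
      exact ⟨fun h => h.2, fun h => ⟨(hE e he).1 h, h⟩⟩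
    rw [this, (hE e he).2]; simp
  rw [Finset.sum_congr rfl step2, Finset.sum_const, smul_eq_mul, mul_comm]

lemma card_E_le {A : Finset V} {E : Finset (Finset V)} {u : ℕ}
    (hE : ∀ e ∈ E, e ⊆ A ∧ e.card = u) :
    E.card ≤ A.card.choose u := by
  have h1 : E ⊆ A.powersetCard u := by
    intro e he
    rw [mem_powersetCard]
    exact hE e he
  have := card_le_card h1
  rwa [card_powersetCard] at this

lemma c_ge {A : Finset V} {E : Finset (Finset V)} {u : ℕ}
    (hE : ∀ e ∈ E, e ⊆ A ∧ e.card = u + 1) {x y : V} (hx : x ∈ A) (hy : y ∈ A)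
    (hxy : x ≠ y) :
    |(deg E x : ℝ) - (deg E y : ℝ)|
      ≤ (((A.powersetCard (u+1+1)).filter (fun S => x ∈ S ∧ y ∈ S ∧
        ¬ ((S.erase x ∈ E) ↔ (S.erase y ∈ E)))).card : ℝ) := by
  classical
  set D := (A.powersetCard (u+1+1)).filter (fun S => x ∈ S ∧ y ∈ S) with hD
  set cxy := (D.filter (fun S => ¬ ((S.erase x ∈ E) ↔ (S.erase y ∈ E)))).card with hc
  have hcc : ((A.powersetCard (u+1+1)).filter (fun S => x ∈ S ∧ y ∈ S ∧
      ¬ ((S.erase x ∈ E) ↔ (S.erase y ∈ E)))).card = cxy := by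
    rw [hc, hD, filter_filter]
    simp only [and_assoc]
  set aX := (D.filter (fun S => S.erase y ∈ E)).card with haX
  set aY := (D.filter (fun S => S.erase x ∈ E)).card with haY
  have n1 : aX ≤ cxy + aY := by
    have hsub : D.filter (fun S => S.erase y ∈ E)
        ⊆ (D.filter (fun S => ¬ ((S.erase x ∈ E) ↔ (S.erase y ∈ E))))
          ∪ D.filter (fun S => S.erase x ∈ E) := by
      intro S hS
      rw [mem_filter] at hS
      by_cases h : S.erase x ∈ E
      · exact mem_union_right _ (mem_filter.mpr ⟨hS.1, h⟩)
      · exact mem_union_left _ (mem_filter.mpr ⟨hS.1, fun hiff => h (hiff.mpr hS.2)⟩)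
    calc aX ≤ _ := card_le_card hsub
    _ ≤ cxy + aY := card_union_le _ _
  have n2 : aY ≤ cxy + aX := by
    have hsub : D.filter (fun S => S.erase x ∈ E)
        ⊆ (D.filter (fun S => ¬ ((S.erase x ∈ E) ↔ (S.erase y ∈ E))))
          ∪ D.filter (fun S => S.erase y ∈ E) := by
      intro S hS
      rw [mem_filter] at hS
      by_cases h : S.erase y ∈ E
      · exact mem_union_right _ (mem_filter.mpr ⟨hS.1, h⟩)
      · exact mem_union_left _ (mem_filter.mpr ⟨hS.1, fun hiff => h (hiff.mp hS.2)⟩)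
    calc aY ≤ _ := card_le_card hsub
    _ ≤ cxy + aX := card_union_le _ _
  have e1 : aX = (E.filter (fun e => x ∈ e ∧ y ∉ e)).card := by
    apply Finset.card_bij (fun S _ => S.erase y)
    · intro S hS
      rw [mem_filter, hD, mem_filter, mem_powersetCard] at hS
      obtain ⟨⟨⟨hSA, hScard⟩, hxS, hyS⟩, hSE⟩ := hS
      rw [mem_filter]
      exact ⟨hSE, mem_erase.mpr ⟨hxy, hxS⟩, notMem_erase _ _⟩
    · intro S1 h1 S2 h2 heq
      rw [mem_filter, hD, mem_filter] at h1 h2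
      rw [← insert_erase h1.1.2.2, heq, insert_erase h2.1.2.2]
    · intro e he
      rw [mem_filter] at he
      obtain ⟨heE, hxe, hye⟩ := he
      refine ⟨insert y e, ?_, erase_insert hye⟩
      rw [mem_filter, hD, mem_filter, mem_powersetCard]
      obtain ⟨heA, hecard⟩ := hE e heE
      refine ⟨⟨⟨insert_subset hy heA, ?_⟩, mem_insert_of_mem hxe, mem_insert_self _ _⟩, ?_⟩
      · rw [card_insert_of_notMem hye, hecard]
      · rw [erase_insert hye]; exact heE
  have e2 : aY = (E.filter (fun e => y ∈ e ∧ x ∉ e)).card := by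
    apply Finset.card_bij (fun S _ => S.erase x)
    · intro S hS
      rw [mem_filter, hD, mem_filter, mem_powersetCard] at hS
      obtain ⟨⟨⟨hSA, hScard⟩, hxS, hyS⟩, hSE⟩ := hS
      rw [mem_filter]
      exact ⟨hSE, mem_erase.mpr ⟨hxy.symm, hyS⟩, notMem_erase _ _⟩
    · intro S1 h1 S2 h2 heq
      rw [mem_filter, hD, mem_filter] at h1 h2
      rw [← insert_erase h1.1.2.1, heq, insert_erase h2.1.2.1]
    · intro e he
      rw [mem_filter] at he
      obtain ⟨heE, hye, hxe⟩ := he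
      refine ⟨insert x e, ?_, erase_insert hxe⟩
      rw [mem_filter, hD, mem_filter, mem_powersetCard]
      obtain ⟨heA, hecard⟩ := hE e heE
      refine ⟨⟨⟨insert_subset hx heA, ?_⟩, mem_insert_self _ _, mem_insert_of_mem hye⟩, ?_⟩
      · rw [card_insert_of_notMem hxe, hecard]
      · rw [erase_insert hxe]; exact heE
  have d1 : deg E x = (E.filter (fun e => x ∈ e ∧ y ∈ e)).card + aX := by
    rw [e1, deg, ← filter_filter, ← filter_filter]
    exact (card_filter_add_card_filter_not (p := fun e => y ∈ e)).symm
  have d2 : deg E y = (E.filter (fun e => x ∈ e ∧ y ∈ e)).card + aY := by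
    have hpart : (E.filter (fun e => y ∈ e ∧ x ∈ e)).card
        + (E.filter (fun e => y ∈ e ∧ x ∉ e)).card = deg E y := by
      rw [deg, ← filter_filter, ← filter_filter]
      exact card_filter_add_card_filter_not (p := fun e => x ∈ e)
    have hsw : E.filter (fun e => y ∈ e ∧ x ∈ e) = E.filter (fun e => x ∈ e ∧ y ∈ e) :=
      filter_congr (fun e _ => by tauto)
    rw [e2, ← hsw]
    omega
  rw [hcc, abs_le]
  constructor
  · rw [d1, d2]; push_cast
    have : (aY : ℝ) ≤ cxy + aX := by exact_mod_cast n2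
    linarith
  · rw [d1, d2]; push_cast
    have : (aX : ℝ) ≤ cxy + aY := by exact_mod_cast n1
    linarith


lemma expand (A : Finset V) (D : V → ℝ) :
    ∑ p ∈ A ×ˢ A, (D p.1 - D p.2)^2
      = 2*(A.card:ℝ)*(∑ v ∈ A, (D v)^2) - 2*(∑ v ∈ A, D v)^2 := by
  rw [Finset.sum_product]
  have h1 : ∀ x ∈ A, ∑ y ∈ A, (D x - D y)^2
      = (A.card:ℝ) * (D x)^2 - (2*(D x))*(∑ y ∈ A, D y) + ∑ y ∈ A, (D y)^2 := by
    intro x _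
    rw [Finset.sum_congr rfl (fun y _ => (by ring :
        (D x - D y)^2 = (D x)^2 - (2*(D x))*(D y) + (D y)^2)),
      Finset.sum_add_distrib, Finset.sum_sub_distrib, ← Finset.mul_sum, Finset.sum_const,
      nsmul_eq_mul]
  rw [Finset.sum_congr rfl h1, Finset.sum_add_distrib, Finset.sum_sub_distrib, ← Finset.mul_sum,
    ← Finset.sum_mul, Finset.sum_const, nsmul_eq_mul]
  have h2 : ∑ x ∈ A, 2 * D x = 2 * ∑ x ∈ A, D x := by
    rw [Finset.mul_sum]
  rw [h2]
  ring

lemma sum_offDiag_eq_product (A : Finset V) (D : V → ℝ) :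
    ∑ p ∈ A.offDiag, (D p.1 - D p.2)^2 = ∑ p ∈ A ×ˢ A, (D p.1 - D p.2)^2 := by
  apply Finset.sum_subset
  · intro p hp
    rw [mem_offDiag] at hp
    rw [mem_product]
    exact ⟨hp.1, hp.2.1⟩
  · intro p hp hnp
    rw [mem_product] at hp
    rw [mem_offDiag] at hnp
    push_neg at hnp
    rw [hnp hp.1 hp.2]
    ring

set_option maxHeartbeats 1000000 in
lemma bound2 {A : Finset V} {E : Finset (Finset V)} {u : ℕ}
    (hE : ∀ e ∈ E, e ⊆ A ∧ e.card = u + 1) :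
    2*(A.card:ℝ)*(∑ v ∈ A, (deg E v:ℝ)^2) - 2*(∑ v ∈ A, (deg E v:ℝ))^2
      ≤ ((A.card - 1).choose u : ℝ) * (2 * Wt (u+1) A E) := by
  set CD := ((A.card - 1).choose u : ℝ) with hCD
  have h0 : ∀ p ∈ A.offDiag, ((deg E p.1:ℝ) - (deg E p.2:ℝ))^2
      ≤ CD * (((A.powersetCard (u+1+1)).filter (fun S => p.1 ∈ S ∧ p.2 ∈ S ∧
        ¬ ((S.erase p.1 ∈ E) ↔ (S.erase p.2 ∈ E)))).card : ℝ) := by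
    intro p hp
    rw [mem_offDiag] at hp
    have habs := c_ge hE hp.1 hp.2.1 hp.2.2
    have hd1 : (deg E p.1 : ℝ) ≤ CD := by
      have := deg_le hE hp.1; rw [hCD]; exact_mod_cast this
    have hd2 : (deg E p.2 : ℝ) ≤ CD := by
      have := deg_le hE hp.2.1; rw [hCD]; exact_mod_cast this
    have hCD2 : |(deg E p.1:ℝ) - (deg E p.2:ℝ)| ≤ CD := by
      rw [abs_sub_le_iff]
      constructor
      · have : (0:ℝ) ≤ (deg E p.2 : ℝ) := by positivity
        linarith
      · have : (0:ℝ) ≤ (deg E p.1 : ℝ) := by positivity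
        linarith
    calc ((deg E p.1:ℝ) - (deg E p.2:ℝ))^2
        = |(deg E p.1:ℝ) - (deg E p.2:ℝ)| * |(deg E p.1:ℝ) - (deg E p.2:ℝ)| := by
          rw [← sq_abs, sq]
      _ ≤ CD * _ := mul_le_mul hCD2 habs (abs_nonneg _) (by positivity)
  have hF := F1 E (u+1) A
  have hsum := Finset.sum_le_sum h0
  have hmul : ∑ p ∈ A.offDiag, CD * (((A.powersetCard (u+1+1)).filter (fun S => p.1 ∈ S ∧ p.2 ∈ S ∧
        ¬ ((S.erase p.1 ∈ E) ↔ (S.erase p.2 ∈ E)))).card : ℝ) = CD * (2 * Wt (u+1) A E) := by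
    rw [← Finset.mul_sum, hF]
  have e1 := expand A (fun v => (deg E v : ℝ))
  have e2 := sum_offDiag_eq_product A (fun v => (deg E v : ℝ))
  linarith

lemma cauchy (A : Finset V) (D : V → ℝ) :
    (∑ v ∈ A, D v)^2 ≤ (A.card:ℝ) * ∑ v ∈ A, (D v)^2 := by
  have h := expand A D
  have h0 : (0:ℝ) ≤ ∑ p ∈ A ×ˢ A, (D p.1 - D p.2)^2 :=
    Finset.sum_nonneg fun p _ => sq_nonneg _
  nlinarith


set_option maxHeartbeats 1000000 in
theorem key (u : ℕ) : ∀ (A : Finset V) (E : Finset (Finset V)), 1 ≤ u →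
    (∀ e ∈ E, e ⊆ A ∧ e.card = u) →
    (E.card : ℝ) / (A.card.choose u : ℝ) * (1 - (E.card : ℝ) / (A.card.choose u : ℝ)) *
      (A.card.choose (u+1) : ℝ) ≤ Wt u A E := by
  induction u with
  | zero => intro A E h _; exact absurd h (by omega)
  | succ c ih =>
    intro A E _ hE
    by_cases hsmall : A.card < c + 2
    · have h0 : A.card.choose (c+1+1) = 0 := Nat.choose_eq_zero_of_lt (by omega)
      rw [h0]
      push_cast
      simpa using Wt_nonneg (c+1) A E
    push_neg at hsmall
    set n := A.card with hn
    set N := (n : ℝ) with hN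
    set e := (E.card : ℝ) with he
    set CD := (((n-1).choose c : ℝ)) with hCD
    set CN1 := ((n.choose (c+1) : ℝ)) with hCN1
    set CN2 := ((n.choose (c+1+1) : ℝ)) with hCN2
    set Sd := ∑ v ∈ A, (deg E v : ℝ) with hSd
    set Pd := ∑ v ∈ A, (deg E v : ℝ)^2 with hPd
    have hNpos : (0:ℝ) < N := by
      rw [hN]; exact_mod_cast Nat.pos_of_ne_zero (by omega)
    have hCDpos : (0:ℝ) < CD := by
      rw [hCD]; exact_mod_cast Nat.choose_pos (by omega : c ≤ n - 1)
    have hCN1pos : (0:ℝ) < CN1 := by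
      rw [hCN1]; exact_mod_cast Nat.choose_pos (by omega : c + 1 ≤ n)
    have hepos : (0:ℝ) ≤ e := by rw [he]; positivity
    have hSd0 : (0:ℝ) ≤ Sd := by rw [hSd]; positivity
    have hPd0 : (0:ℝ) ≤ Pd := by rw [hPd]; positivity
    have hSdeq : Sd = ((c:ℝ)+1) * e := by
      have h := sum_deg hE
      have h2 : ((∑ v ∈ A, deg E v : ℕ) : ℝ) = (((c+1) * E.card : ℕ) : ℝ) := by
        exact_mod_cast h
      push_cast at h2
      rw [hSd, he]
      convert h2 using 2
    have h2 := bound2 (u := c) hE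
    rw [← hn, ← hCD] at h2
    have h2' : 2*N*Pd - 2*Sd^2 ≤ 2 * Wt (c+1) A E * CD := by
      rw [hN, hSd, hPd]
      calc 2*(n:ℝ)*(∑ v ∈ A, (deg E v : ℝ)^2) - 2*(∑ v ∈ A, (deg E v : ℝ))^2
          ≤ CD * (2 * Wt (c+1) A E) := h2
        _ = 2 * Wt (c+1) A E * CD := by ring
    have hCS : Sd^2 ≤ N * Pd := by
      have := cauchy A (fun v => (deg E v : ℝ))
      rw [hSd, hPd, hN, hn]
      exact this
    have hW0 : (0:ℝ) ≤ Wt (c+1) A E := Wt_nonneg _ _ _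
    have hrel1 : N * CD = ((c:ℝ)+1) * CN1 := by
      have h := Nat.add_one_mul_choose_eq (n-1) c
      rw [(by omega : n - 1 + 1 = n)] at h
      have h2 : ((n * (n-1).choose c : ℕ) : ℝ) = ((n.choose (c+1) * (c+1) : ℕ) : ℝ) := by
        exact_mod_cast h
      push_cast at h2
      rw [hN, hCD, hCN1]
      linarith
    have hcast1 : (((n-1) - c : ℕ) : ℝ) = N - ((c:ℝ)+1) := by
      rw [Nat.cast_sub (by omega : c ≤ n - 1), Nat.cast_sub (by omega : 1 ≤ n)]
      push_cast
      rw [hN]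
      ring
    rcases Nat.eq_zero_or_pos c with hc0 | hcpos
    · -- base case u = 1
      subst hc0
      have hCD1 : CD = 1 := by rw [hCD]; simp
      have hP : Pd = Sd := by
        rw [hPd, hSd]
        apply Finset.sum_congr rfl
        intro v hv
        have h := deg_le (u := 0) hE hv
        rw [Nat.choose_zero_right] at h
        rcases Nat.le_one_iff_eq_zero_or_eq_one.mp h with h' | h' <;> rw [h'] <;> norm_num
      have hSe : Sd = e := by rw [hSdeq]; ring
      have hWb : N*e - e^2 ≤ Wt 1 A E := by
        rw [hCD1] at h2'
        rw [hSe, hP, hSe] at h2'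
        nlinarith
      have hle : e ≤ N := by
        have h := card_E_le hE
        rw [← hn, Nat.choose_one_right] at h
        rw [he, hN]
        exact_mod_cast h
      have hCN2le : CN2 ≤ N^2 := by
        have h1 : n.choose 2 ≤ n * n := by
          rw [Nat.choose_two_right]
          calc n * (n-1) / 2 ≤ n * (n-1) := Nat.div_le_self _ _
            _ ≤ n * n := Nat.mul_le_mul_left _ (by omega)
        rw [hCN2, hN]
        have : ((n.choose 2 : ℕ):ℝ) ≤ ((n*n : ℕ):ℝ) := by exact_mod_cast h1
        push_cast at this
        nlinarith
      have hCN1N : CN1 = N := by rw [hCN1, Nat.choose_one_right, hN]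
      rw [hCN1N]
      have hgoal : e/N * (1 - e/N) * CN2 = e*(N-e)*CN2/N^2 := by
        have hN0 : N ≠ 0 := ne_of_gt hNpos
        rw [eq_div_iff (by positivity : (N^2:ℝ) ≠ 0)]
        calc e/N * (1 - e/N) * CN2 * N^2
            = (e/N*N) * ((1 - e/N)*N) * CN2 := by ring
          _ = e*(N-e)*CN2 := by
              rw [div_mul_cancel₀ _ hN0, sub_mul, one_mul, div_mul_cancel₀ _ hN0]
      rw [hgoal, div_le_iff₀ (by positivity)]
      nlinarith [mul_nonneg (mul_nonneg hepos (sub_nonneg.mpr hle)) (sub_nonneg.mpr hCN2le),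
        mul_le_mul_of_nonneg_right hWb (sq_nonneg N)]
    · -- inductive step, c ≥ 1
      set CU := (((n-1).choose (c+1) : ℝ)) with hCU
      have hCUpos : (0:ℝ) < CU := by
        rw [hCU]; exact_mod_cast Nat.choose_pos (by omega : c + 1 ≤ n - 1)
      have hCN2pos : (0:ℝ) < CN2 := by
        rw [hCN2]; exact_mod_cast Nat.choose_pos (by omega : c + 2 ≤ n)
      have hrel2 : CU * ((c:ℝ)+1) = CD * (N - ((c:ℝ)+1)) := by
        have h := Nat.choose_succ_right_eq (n-1) c
        have h2 : (((n-1).choose (c+1) * (c+1) : ℕ) : ℝ)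
            = (((n-1).choose c * ((n-1) - c) : ℕ) : ℝ) := by exact_mod_cast h
        push_cast [hcast1] at h2
        rw [hCU, hCD]
        push_cast
        linarith [h2]
      have hrel3 : ((c:ℝ)+2) * CN2 = N * CU := by
        have h := Nat.add_one_mul_choose_eq (n-1) (c+1)
        rw [(by omega : n - 1 + 1 = n)] at h
        have h2 : ((n * (n-1).choose (c+1) : ℕ) : ℝ)
            = ((n.choose (c+1+1) * (c+1+1) : ℕ) : ℝ) := by exact_mod_cast h
        push_cast at h2
        rw [hN, hCU, hCN2]
        push_cast
        linarith
      have h1 : ∀ v ∈ A, ((deg E v : ℝ)*CD - (deg E v : ℝ)^2) * CU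
          ≤ Wt c (A.erase v) (link E v) * CD^2 := by
        intro v hv
        have ihv := ih (A.erase v) (link E v) hcpos (link_edges hE v)
        rw [card_link, card_erase_of_mem hv, ← hn, ← hCD] at ihv
        have hch : (((n-1).choose (c+1) : ℕ) : ℝ) = CU := by rw [hCU]
        rw [hch] at ihv
        have heq : (deg E v : ℝ)/CD * (1 - (deg E v : ℝ)/CD) * CU
            = ((deg E v : ℝ)*CD - (deg E v : ℝ)^2) * CU / CD^2 := by
          field_simp
        rw [heq, div_le_iff₀ (by positivity)] at ihv
        exact ihv
      have h1sum : (Sd*CD - Pd) * CU ≤ (c:ℝ) * Wt (c+1) A E * CD^2 := by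
        have hsplit : ∑ v ∈ A, ((deg E v : ℝ)*CD - (deg E v : ℝ)^2) = Sd*CD - Pd := by
          rw [Finset.sum_sub_distrib, ← Finset.sum_mul, hSd, hPd]
        have hs := Finset.sum_le_sum h1
        rw [← Finset.sum_mul, ← Finset.sum_mul, hsplit, linkIdentity] at hs
        linarith [hs]
      have hcN : ((c:ℝ)+2) ≤ N := by
        rw [hN]
        have : ((c+2 : ℕ):ℝ) ≤ ((n:ℕ):ℝ) := by exact_mod_cast hsmall
        push_cast at this
        linarith
      have hc1 : (1:ℝ) ≤ (c:ℝ) := by exact_mod_cast hcpos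
      have h2NCD : CU ≤ 2*N*CD := by
        nlinarith [hrel2, hCDpos.le, hNpos.le, hcN, hc1]
      have hCN1eq : CN1 = N*CD/((c:ℝ)+1) := by
        rw [eq_div_iff (by positivity)]
        linarith [hrel1]
      have hCN2eq : CN2 = N*CU/((c:ℝ)+2) := by
        rw [eq_div_iff (by positivity)]
        linarith [hrel3]
      have heeq : e = Sd/((c:ℝ)+1) := by
        rw [eq_div_iff (by positivity)]
        linarith [hSdeq]
      have hgoal : e/CN1 * (1 - e/CN1) * CN2
          = Sd*(N*CD - Sd)*CU / (N*CD^2*((c:ℝ)+2)) := by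
        rw [hCN1eq, hCN2eq, heeq, eq_div_iff (ne_of_gt (mul_pos (mul_pos hNpos (pow_pos hCDpos 2)) (by linarith)) : (N*CD^2*((c:ℝ)+2)) ≠ 0)]
        field_simp
      rw [hgoal, div_le_iff₀ (mul_pos (mul_pos hNpos (pow_pos hCDpos 2)) (by linarith))]
      have key1 : N*((Sd*CD - Pd)*CU) ≤ N*((c:ℝ) * Wt (c+1) A E * CD^2) :=
        mul_le_mul_of_nonneg_left h1sum hNpos.le
      have key2 : (N*CD)*(2*N*Pd - 2*Sd^2) ≤ (N*CD)*(2 * Wt (c+1) A E * CD) :=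
        mul_le_mul_of_nonneg_left h2' (mul_pos hNpos hCDpos).le
      have key3 : (0:ℝ) ≤ (N*Pd - Sd^2)*(2*N*CD - CU) :=
        mul_nonneg (by linarith) (by linarith)
      nlinarith [key1, key2, key3]

end Stmt4Aux

/-- For an `r`-uniform hypergraph `F` of edge density `ρ ∈ [α, 1-α]` on sufficiently
many vertices, the sum of `|D_F(v,v')|` over unordered pairs `{v,v'}` (here expressed
as half the sum over ordered pairs of distinct vertices) is at least
`α(1-α) * (n choose (r+1))`. Here `D_F(u,v)` is the family of `(r+1)`-sets `S`
containing `u, v` such that exactly one of `S - u`, `S - v` is an edge. -/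
theorem stmt4 (r : ℕ) (hr : 1 ≤ r) (α : ℝ) (hα : 0 < α) :
    ∃ n₀ : ℕ, ∀ (V : Type) [Fintype V] [DecidableEq V] (n : ℕ),
      Fintype.card V = n → n₀ ≤ n →
      ∀ E : Finset (Finset V), (∀ e ∈ E, e.card = r) →
      α ≤ (E.card : ℝ) / (n.choose r : ℝ) → (E.card : ℝ) / (n.choose r : ℝ) ≤ 1 - α →
      α * (1 - α) * (n.choose (r + 1) : ℝ) ≤
        (1 / 2 : ℝ) * ∑ p ∈ (Finset.univ : Finset V).offDiag,
          (((Finset.univ.powersetCard (r + 1)).filter (fun S =>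
            p.1 ∈ S ∧ p.2 ∈ S ∧ ¬ ((S.erase p.1 ∈ E) ↔ (S.erase p.2 ∈ E)))).card : ℝ) := by
  refine ⟨0, ?_⟩
  intro V _ _ n hcard _ E hEr hlo hhi
  have hA : (Finset.univ : Finset V).card = n := by
    rw [Finset.card_univ, hcard]
  have hE' : ∀ e ∈ E, e ⊆ (Finset.univ : Finset V) ∧ e.card = r :=
    fun e he => ⟨Finset.subset_univ e, hEr e he⟩
  have hkey := Stmt4Aux.key r (Finset.univ : Finset V) E hr hE'
  rw [hA] at hkey
  have hF1 := Stmt4Aux.F1 E r (Finset.univ : Finset V)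
  set ρ := (E.card : ℝ) / (n.choose r : ℝ) with hρdef
  have hC0 : (0:ℝ) ≤ (n.choose (r+1) : ℝ) := by positivity
  have hstep1 : α * (1 - α) * (n.choose (r+1) : ℝ) ≤ ρ * (1 - ρ) * (n.choose (r+1) : ℝ) := by
    have h1 : (0:ℝ) ≤ (ρ - α) * (1 - α - ρ) :=
      mul_nonneg (by linarith) (by linarith)
    nlinarith
  have hstep2 : ρ * (1 - ρ) * (n.choose (r+1) : ℝ) ≤ Stmt4Aux.Wt r (Finset.univ : Finset V) E := by
    calc ρ * (1 - ρ) * (n.choose (r+1) : ℝ) = ρ * (1 - ρ) * (n.choose (r+1) : ℝ) := rfl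
      _ ≤ _ := hkey
  have hstep3 : Stmt4Aux.Wt r (Finset.univ : Finset V) E
      = (1 / 2 : ℝ) * ∑ p ∈ (Finset.univ : Finset V).offDiag,
          (((Finset.univ.powersetCard (r + 1)).filter (fun S =>
            p.1 ∈ S ∧ p.2 ∈ S ∧ ¬ ((S.erase p.1 ∈ E) ↔ (S.erase p.2 ∈ E)))).card : ℝ) := by
    rw [hF1]
    ring
  linarith
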